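/- If (u*,v*,z*) is a saddle point of the Lagrangian L, then (z*, d−Cv*) belongs to the extended solution set S_e, i.e. −(d−Cv*) ∈ ∂h1(z*) and d−Cv* ∈ ∂h2(z*). -/

import Mathlib

open scoped RealInnerProductSpace

noncomputable section

/-- `w` is a subgradient of the extended-real-valued function `φ` at `x`. -/
def HasSubgrad {E : Type*} [NormedAddCommGroup E] [InnerProductSpace ℝ E]
    (φ : E → EReal) (w x : E) : Prop :=
  ∀ x' : E, φ x + ((⟪w, x' - x⟫ : ℝ) : EReal) ≤ φ x'

/-- `w` is an `ε`-subgradient of `φ` at `x`. -/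
def HasESubgrad {E : Type*} [NormedAddCommGroup E] [InnerProductSpace ℝ E]
    (φ : E → EReal) (ε : ℝ) (w x : E) : Prop :=
  ∀ x' : E, φ x + ((⟪w, x' - x⟫ : ℝ) : EReal) - (ε : EReal) ≤ φ x'

/-- Convexity for an extended-real-valued function. -/
def ConvexE {E : Type*} [NormedAddCommGroup E] [InnerProductSpace ℝ E]
    (φ : E → EReal) : Prop :=
  ∀ x y : E, ∀ a b : ℝ, 0 ≤ a → 0 ≤ b → a + b = 1 →
    φ (a • x + b • y) ≤ (a : EReal) * φ x + (b : EReal) * φ y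

/-- Proper closed convex function with values in `(-∞, ∞]`. -/
def IsPCC {E : Type*} [NormedAddCommGroup E] [InnerProductSpace ℝ E]
    (φ : E → EReal) : Prop :=
  (∀ x, φ x ≠ ⊥) ∧ (∃ x, φ x ≠ ⊤) ∧ LowerSemicontinuous φ ∧ ConvexE φ

/-- Fenchel conjugate. -/
def fconj {E : Type*} [NormedAddCommGroup E] [InnerProductSpace ℝ E]
    (φ : E → EReal) (w : E) : EReal :=
  ⨆ x : E, ((⟪w, x⟫ : ℝ) : EReal) - φ x

/-- Lagrangian of `min { f u + g v : M u + C v = d }`. -/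
def Lag {E₁ E₂ F : Type*} [NormedAddCommGroup E₁] [InnerProductSpace ℝ E₁]
    [NormedAddCommGroup E₂] [InnerProductSpace ℝ E₂]
    [NormedAddCommGroup F] [InnerProductSpace ℝ F]
    (f : E₁ → EReal) (g : E₂ → EReal) (M : E₁ →ₗ[ℝ] F) (C : E₂ →ₗ[ℝ] F) (d : F)
    (u : E₁) (v : E₂) (z : F) : EReal :=
  f u + g v + ((⟪M u + C v - d, z⟫ : ℝ) : EReal)

/-- Saddle point of the Lagrangian. -/
def IsSaddle {E₁ E₂ F : Type*} [NormedAddCommGroup E₁] [InnerProductSpace ℝ E₁]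
    [NormedAddCommGroup E₂] [InnerProductSpace ℝ E₂]
    [NormedAddCommGroup F] [InnerProductSpace ℝ F]
    (f : E₁ → EReal) (g : E₂ → EReal) (M : E₁ →ₗ[ℝ] F) (C : E₂ →ₗ[ℝ] F) (d : F)
    (us : E₁) (vs : E₂) (zs : F) : Prop :=
  Lag f g M C d us vs zs ≠ ⊤ ∧ Lag f g M C d us vs zs ≠ ⊥ ∧
  (∀ u v, Lag f g M C d us vs zs ≤ Lag f g M C d u v zs) ∧
  (∀ ζ, Lag f g M C d us vs ζ ≤ Lag f g M C d us vs zs)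

/-- `h₁(z) = f*(-M* z)`. -/
def hOne {E₁ F : Type*} [NormedAddCommGroup E₁] [InnerProductSpace ℝ E₁]
    [FiniteDimensional ℝ E₁] [NormedAddCommGroup F] [InnerProductSpace ℝ F]
    [FiniteDimensional ℝ F] (f : E₁ → EReal) (M : E₁ →ₗ[ℝ] F) (z : F) : EReal :=
  fconj f (-(LinearMap.adjoint M z))

/-- `h₂(z) = g*(-C* z) + ⟪d, z⟫`. -/
def hTwo {E₂ F : Type*} [NormedAddCommGroup E₂] [InnerProductSpace ℝ E₂]
    [FiniteDimensional ℝ E₂] [NormedAddCommGroup F] [InnerProductSpace ℝ F]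
    [FiniteDimensional ℝ F] (g : E₂ → EReal) (C : E₂ →ₗ[ℝ] F) (d : F) (z : F) : EReal :=
  fconj g (-(LinearMap.adjoint C z)) + ((⟪d, z⟫ : ℝ) : EReal)

/-- The extended solution set `S_e(∂h₁, ∂h₂)`. -/
def extSolSet {E₁ E₂ F : Type*} [NormedAddCommGroup E₁] [InnerProductSpace ℝ E₁]
    [FiniteDimensional ℝ E₁] [NormedAddCommGroup E₂] [InnerProductSpace ℝ E₂]
    [FiniteDimensional ℝ E₂] [NormedAddCommGroup F] [InnerProductSpace ℝ F]
    [FiniteDimensional ℝ F]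
    (f : E₁ → EReal) (g : E₂ → EReal) (M : E₁ →ₗ[ℝ] F) (C : E₂ →ₗ[ℝ] F) (d : F) :
    Set (F × F) :=
  {p | HasSubgrad (hOne f M) (-p.2) p.1 ∧ HasSubgrad (hTwo g C d) p.2 p.1}

/-- if `(u*, v*, z*)` is a saddle point of the Lagrangian `L`, then
`(z*, d - Cv*)` belongs to the extended solution set `S_e`, i.e.
`-(d - Cv*) ∈ ∂h₁(z*)` and `d - Cv* ∈ ∂h₂(z*)`. -/
theorem saddle_mem_extSolSet (m1 m2 n : ℕ)
    (f : EuclideanSpace ℝ (Fin m1) → EReal) (g : EuclideanSpace ℝ (Fin m2) → EReal)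
    (hf : IsPCC f) (hg : IsPCC g)
    (M : EuclideanSpace ℝ (Fin m1) →ₗ[ℝ] EuclideanSpace ℝ (Fin n))
    (C : EuclideanSpace ℝ (Fin m2) →ₗ[ℝ] EuclideanSpace ℝ (Fin n))
    (d : EuclideanSpace ℝ (Fin n))
    (ustar : EuclideanSpace ℝ (Fin m1)) (vstar : EuclideanSpace ℝ (Fin m2))
    (zstar : EuclideanSpace ℝ (Fin n))
    (hsad : IsSaddle f g M C d ustar vstar zstar) :
    (zstar, d - C vstar) ∈ extSolSet f g M C d := by
  obtain ⟨hnt, hnb, hmin, hmax⟩ := hsad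
  have hfb : f ustar ≠ ⊥ := hf.1 ustar
  have hgb : g vstar ≠ ⊥ := hg.1 vstar
  have hft : f ustar ≠ ⊤ := by
    intro h
    apply hnt
    unfold Lag
    rw [h, EReal.top_add_of_ne_bot hgb, EReal.top_add_of_ne_bot (EReal.coe_ne_bot _)]
  have hgt : g vstar ≠ ⊤ := by
    intro h
    apply hnt
    unfold Lag
    rw [h, EReal.add_top_of_ne_bot hfb, EReal.top_add_of_ne_bot (EReal.coe_ne_bot _)]
  obtain ⟨a, ha⟩ : ∃ a : ℝ, f ustar = (a : EReal) :=
    ⟨(f ustar).toReal, (EReal.coe_toReal hft hfb).symm⟩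
  obtain ⟨b, hb⟩ : ∃ b : ℝ, g vstar = (b : EReal) :=
    ⟨(g vstar).toReal, (EReal.coe_toReal hgt hgb).symm⟩
  -- Step 1: feasibility
  have hs : M ustar + C vstar = d := by
    by_contra hne
    set s := M ustar + C vstar - d with hsdef
    have hs0 : s ≠ 0 := sub_ne_zero.mpr hne
    have hle := hmax (zstar + s)
    unfold Lag at hle
    rw [ha, hb] at hle
    have hle' : ((a + b + ⟪s, zstar + s⟫ : ℝ) : EReal) ≤ ((a + b + ⟪s, zstar⟫ : ℝ) : EReal) := by
      push_cast
      exact hle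
    have hre : (a + b + ⟪s, zstar + s⟫ : ℝ) ≤ a + b + ⟪s, zstar⟫ := EReal.coe_le_coe_iff.mp hle'
    rw [inner_add_right] at hre
    have hpos : (0 : ℝ) < ⟪s, s⟫ := by
      rcases lt_or_eq_of_le (real_inner_self_nonneg (x := s)) with h | h
      · exact h
      · exact absurd ((@inner_self_eq_zero ℝ _ _ _ _ s).mp h.symm) hs0
    linarith
  have hMu : M ustar = d - C vstar := by rw [← hs]; abel
  -- key inequality for f
  have hkey1 : ∀ u, ((⟪-(LinearMap.adjoint M zstar), u⟫ : ℝ) : EReal) - f u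
      ≤ ((⟪-(LinearMap.adjoint M zstar), ustar⟫ - a : ℝ) : EReal) := by
    intro u
    rcases eq_or_ne (f u) ⊤ with h | h
    · rw [h]
      simp
    · obtain ⟨c, hc⟩ : ∃ c : ℝ, f u = (c : EReal) :=
        ⟨(f u).toReal, (EReal.coe_toReal h (hf.1 u)).symm⟩
      have hm := hmin u vstar
      unfold Lag at hm
      rw [ha, hb, hc] at hm
      have hm' : ((a + b + ⟪M ustar + C vstar - d, zstar⟫ : ℝ) : EReal)
          ≤ ((c + b + ⟪M u + C vstar - d, zstar⟫ : ℝ) : EReal) := by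
        push_cast
        exact hm
      have hre := EReal.coe_le_coe_iff.mp hm'
      have e1 : M ustar + C vstar - d = 0 := by rw [hs]; abel
      have e2 : M u + C vstar - d = M u - M ustar := by rw [← hs]; abel
      rw [e1, e2, inner_zero_left, inner_sub_left] at hre
      rw [hc, ← EReal.coe_sub, EReal.coe_le_coe_iff]
      simp only [inner_neg_left, LinearMap.adjoint_inner_left]
      rw [real_inner_comm zstar (M u), real_inner_comm zstar (M ustar)] at hre
      linarith
  have hval1 : hOne f M zstar = ((⟪-(LinearMap.adjoint M zstar), ustar⟫ - a : ℝ) : EReal) := by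
    unfold hOne fconj
    apply le_antisymm (iSup_le hkey1)
    have hle := le_iSup (fun x => ((⟪-(LinearMap.adjoint M zstar), x⟫ : ℝ) : EReal) - f x) ustar
    rw [ha, ← EReal.coe_sub] at hle
    exact hle
  -- key inequality for g
  have hkey2 : ∀ v, ((⟪-(LinearMap.adjoint C zstar), v⟫ : ℝ) : EReal) - g v
      ≤ ((⟪-(LinearMap.adjoint C zstar), vstar⟫ - b : ℝ) : EReal) := by
    intro v
    rcases eq_or_ne (g v) ⊤ with h | h
    · rw [h]
      simp
    · obtain ⟨c, hc⟩ : ∃ c : ℝ, g v = (c : EReal) :=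
        ⟨(g v).toReal, (EReal.coe_toReal h (hg.1 v)).symm⟩
      have hm := hmin ustar v
      unfold Lag at hm
      rw [ha, hb, hc] at hm
      have hm' : ((a + b + ⟪M ustar + C vstar - d, zstar⟫ : ℝ) : EReal)
          ≤ ((a + c + ⟪M ustar + C v - d, zstar⟫ : ℝ) : EReal) := by
        push_cast
        exact hm
      have hre := EReal.coe_le_coe_iff.mp hm'
      have e1 : M ustar + C vstar - d = 0 := by rw [hs]; abel
      have e2 : M ustar + C v - d = C v - C vstar := by rw [← hs]; abel
      rw [e1, e2, inner_zero_left, inner_sub_left] at hre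
      rw [hc, ← EReal.coe_sub, EReal.coe_le_coe_iff]
      simp only [inner_neg_left, LinearMap.adjoint_inner_left]
      rw [real_inner_comm zstar (C v), real_inner_comm zstar (C vstar)] at hre
      linarith
  have hval2 : fconj g (-(LinearMap.adjoint C zstar))
      = ((⟪-(LinearMap.adjoint C zstar), vstar⟫ - b : ℝ) : EReal) := by
    unfold fconj
    apply le_antisymm (iSup_le hkey2)
    have hle := le_iSup (fun x => ((⟪-(LinearMap.adjoint C zstar), x⟫ : ℝ) : EReal) - g x) vstar
    rw [hb, ← EReal.coe_sub] at hle
    exact hle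
  constructor
  · -- subgradient for h₁
    intro z'
    have hterm : ((⟪-(LinearMap.adjoint M z'), ustar⟫ - a : ℝ) : EReal) ≤ hOne f M z' := by
      unfold hOne fconj
      have hle := le_iSup (fun x => ((⟪-(LinearMap.adjoint M z'), x⟫ : ℝ) : EReal) - f x) ustar
      rw [ha, ← EReal.coe_sub] at hle
      exact hle
    refine le_trans (le_of_eq ?_) hterm
    rw [hval1, ← EReal.coe_add, EReal.coe_eq_coe_iff]
    simp only [inner_neg_left, LinearMap.adjoint_inner_left, inner_neg_neg]
    rw [← hMu, inner_sub_right, real_inner_comm (M ustar) zstar, real_inner_comm (M ustar) z']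
    ring
  · -- subgradient for h₂
    intro z'
    have hterm : ((⟪-(LinearMap.adjoint C z'), vstar⟫ - b : ℝ) : EReal)
        ≤ fconj g (-(LinearMap.adjoint C z')) := by
      unfold fconj
      have hle := le_iSup (fun x => ((⟪-(LinearMap.adjoint C z'), x⟫ : ℝ) : EReal) - g x) vstar
      rw [hb, ← EReal.coe_sub] at hle
      exact hle
    unfold hTwo
    calc fconj g (-(LinearMap.adjoint C zstar)) + ((⟪d, zstar⟫ : ℝ) : EReal)
          + ((⟪d - C vstar, z' - zstar⟫ : ℝ) : EReal)
        = ((⟪-(LinearMap.adjoint C z'), vstar⟫ - b : ℝ) : EReal) + ((⟪d, z'⟫ : ℝ) : EReal) := by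
          rw [hval2, ← EReal.coe_add, ← EReal.coe_add, ← EReal.coe_add, EReal.coe_eq_coe_iff]
          simp only [inner_neg_left, LinearMap.adjoint_inner_left]
          rw [inner_sub_left, inner_sub_right, inner_sub_right,
            real_inner_comm (C vstar) zstar, real_inner_comm (C vstar) z']
          ring
      _ ≤ fconj g (-(LinearMap.adjoint C z')) + ((⟪d, z'⟫ : ℝ) : EReal) :=
          add_le_add_left hterm _
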